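/- arXiv:1601.03193 — 2 statements merged into one kernel-verified Lean document; each statement's English description precedes it below -/
import Mathlib

section
/- Let b(x) = log|x| and f = χ_{(0,1)}. There exists c > 0 such that for all sufficiently large t > 0, |{x ∈ (0,1) : |[b,H]f(x)| > t}| ≥ e^{−√(ct)}, where H is the Hilbert transform. In particular the subgaussian local decay e^{−√(ct)} for commutators [b,T] of Calderón–Zygmund operators cannot be improved to an exponential decay e^{−ct}. -/
open MeasureTheory

open Real Set intervalIntegral in
private lemma neg_log_le' (y : ℝ) (hy0 : 0 < y) : -Real.log y ≤ 2 * y ^ (-(1/2):ℝ) := by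
  rw [← Real.log_inv]
  have h2 := Real.log_le_rpow_div (inv_pos.mpr hy0).le (by norm_num : (0:ℝ) < 1/2)
  calc Real.log y⁻¹ ≤ (y⁻¹) ^ ((1:ℝ)/2) / (1/2) := h2
    _ = 2 * y ^ (-(1/2):ℝ) := by
        rw [← Real.rpow_neg_one y, ← Real.rpow_mul hy0.le]; ring_nf

open Real Set intervalIntegral in
private lemma g_nonneg' {x : ℝ} (hx0 : 0 < x) (y : ℝ) (hy0 : 0 < y) :
    0 ≤ (Real.log x - Real.log y) / (x - y) := by
  rcases lt_trichotomy y x with h | h | h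
  · exact div_nonneg (sub_nonneg.mpr (Real.log_le_log hy0 h.le)) (sub_nonneg.mpr h.le)
  · simp [h]
  · exact div_nonneg_of_nonpos (sub_nonpos.mpr (Real.log_le_log hx0 h.le))
      (sub_nonpos.mpr h.le)

open Real Set intervalIntegral in
private lemma g_bound' {x : ℝ} (hx0 : 0 < x) (hx1 : x < 1) (y : ℝ) (hy : y ∈ Ioc (0:ℝ) 1) :
    (Real.log x - Real.log y) / (x - y) ≤ 2 / x + (4 / x) * y ^ (-(1/2):ℝ) := by
  obtain ⟨hy0, hy1⟩ := hy
  have hrp : (0:ℝ) ≤ (4 / x) * y ^ (-(1/2):ℝ) := by positivity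
  have h2x : (0:ℝ) ≤ 2 / x := by positivity
  rcases lt_trichotomy y x with h | h | h
  · rcases le_or_gt (x/2) y with h2 | h2
    · have hnum : Real.log x - Real.log y ≤ (x - y) / y := by
        have := Real.log_le_sub_one_of_pos (div_pos hx0 hy0)
        rw [Real.log_div hx0.ne' hy0.ne'] at this
        calc Real.log x - Real.log y ≤ x / y - 1 := this
          _ = (x - y) / y := by field_simp
      have hle : (Real.log x - Real.log y) / (x - y) ≤ 1 / y := by
        rw [div_le_div_iff₀ (by linarith) hy0]
        calc (Real.log x - Real.log y) * y ≤ ((x - y)/y) * y :=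
              mul_le_mul_of_nonneg_right hnum hy0.le
          _ = 1 * (x - y) := by field_simp
      have h1y : 1 / y ≤ 2 / x := by
        rw [div_le_div_iff₀ hy0 hx0]; linarith
      linarith
    · have hden : x / 2 ≤ x - y := by linarith
      have hnum : Real.log x - Real.log y ≤ 2 * y ^ (-(1/2):ℝ) := by
        have h1 : Real.log x ≤ 0 := Real.log_nonpos hx0.le hx1.le
        have := neg_log_le' y hy0
        linarith
      have hle : (Real.log x - Real.log y) / (x - y) ≤ (2 * y ^ (-(1/2):ℝ)) / (x/2) :=
        div_le_div₀ (by positivity) hnum (by positivity) hden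
      have heq : (2 * y ^ (-(1/2):ℝ)) / (x/2) = (4/x) * y ^ (-(1/2):ℝ) := by
        field_simp; ring
      rw [heq] at hle; linarith
  · rw [h]; simp; positivity
  · have hnum : Real.log y - Real.log x ≤ (y - x) / x := by
      have := Real.log_le_sub_one_of_pos (div_pos hy0 hx0)
      rw [Real.log_div hy0.ne' hx0.ne'] at this
      calc Real.log y - Real.log x ≤ y / x - 1 := this
        _ = (y - x) / x := by field_simp
    have key : (Real.log x - Real.log y) / (x - y) = (Real.log y - Real.log x) / (y - x) := by
      rw [← neg_div_neg_eq, neg_sub, neg_sub]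
    rw [key]
    have hle : (Real.log y - Real.log x) / (y - x) ≤ 1 / x := by
      rw [div_le_div_iff₀ (by linarith) hx0]
      calc (Real.log y - Real.log x) * x ≤ ((y - x)/x) * x :=
            mul_le_mul_of_nonneg_right hnum hx0.le
        _ = 1 * (y - x) := by field_simp
    have h1x : 1 / x ≤ 2 / x := by gcongr; norm_num
    linarith

open Real Set intervalIntegral in
private lemma g_intble' {x : ℝ} (hx0 : 0 < x) (hx1 : x < 1) :
    IntervalIntegrable (fun y => (Real.log x - Real.log y) / (x - y)) volume 0 1 := by
  rw [intervalIntegrable_iff_integrableOn_Ioc_of_le zero_le_one]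
  have hmeas : AEStronglyMeasurable (fun y => (Real.log x - Real.log y) / (x - y))
      (volume.restrict (Ioc (0:ℝ) 1)) :=
    ((measurable_const.sub Real.measurable_log).div
      (measurable_const.sub measurable_id)).aestronglyMeasurable
  have hint : IntegrableOn (fun y : ℝ => 2 / x + (4 / x) * y ^ (-(1/2):ℝ))
      (Ioc (0:ℝ) 1) volume := by
    rw [← intervalIntegrable_iff_integrableOn_Ioc_of_le zero_le_one]
    exact intervalIntegrable_const.add
      ((intervalIntegrable_rpow' (by norm_num)).const_mul _)
  refine MeasureTheory.Integrable.mono hint hmeas ?_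
  filter_upwards [ae_restrict_mem measurableSet_Ioc] with y hy
  rw [Real.norm_eq_abs, Real.norm_eq_abs,
    abs_of_nonneg (g_nonneg' hx0 y hy.1),
    abs_of_nonneg (add_nonneg (by positivity)
      (mul_nonneg (by positivity) (Real.rpow_nonneg hy.1.le _)))]
  exact g_bound' hx0 hx1 y hy

open Real Set intervalIntegral in
private lemma phi_intble' {x s : ℝ} (hs0 : 0 < s) (hs1 : s < 1) :
    IntervalIntegrable (fun y => (Real.log y - Real.log x) / y) volume s 1 := by
  apply ContinuousOn.intervalIntegrable
  have hne : ∀ y ∈ uIcc s 1, y ≠ 0 := by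
    intro y hy
    rw [uIcc_of_le hs1.le] at hy
    exact ne_of_gt (lt_of_lt_of_le hs0 hy.1)
  exact ((Real.continuousOn_log.mono (fun y hy => hne y hy)).sub
    continuousOn_const).div continuousOn_id hne

open Real Set intervalIntegral in
private lemma integral_lb' {x : ℝ} (hx0 : 0 < x) (hx1 : x < 1) :
    3/8 * Real.log x ^ 2 ≤ ∫ y in (0:ℝ)..1, (Real.log x - Real.log y) / (x - y) := by
  set s := Real.sqrt x with hs
  have hs0 : 0 < s := Real.sqrt_pos.mpr hx0
  have hs1 : s < 1 := by
    rw [hs, show (1:ℝ) = Real.sqrt 1 by simp]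
    exact Real.sqrt_lt_sqrt hx0.le hx1
  have hxs : x < s := by
    rw [hs]
    nlinarith [Real.sq_sqrt hx0.le, Real.sqrt_pos.mpr hx0]
  have hsub1 : uIcc s 1 ⊆ uIcc (0:ℝ) 1 := by
    rw [uIcc_of_le hs1.le, uIcc_of_le zero_le_one]
    exact Icc_subset_Icc hs0.le le_rfl
  have hsub2 : uIcc (0:ℝ) s ⊆ uIcc (0:ℝ) 1 := by
    rw [uIcc_of_le hs0.le, uIcc_of_le zero_le_one]
    exact Icc_subset_Icc le_rfl hs1.le
  have hcomp : ∫ y in s..1, (Real.log y - Real.log x) / y = 3/8 * Real.log x ^ 2 := by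
    have hderiv : ∀ y ∈ uIcc s 1,
        HasDerivAt (fun y => Real.log y ^ 2 / 2 - Real.log x * Real.log y)
          ((Real.log y - Real.log x) / y) y := by
      intro y hy
      rw [uIcc_of_le hs1.le] at hy
      have hy0 : 0 < y := lt_of_lt_of_le hs0 hy.1
      have h1 : HasDerivAt (fun y => Real.log y ^ 2 / 2)
          (Real.log y / y) y := by
        have := ((Real.hasDerivAt_log hy0.ne').pow 2).div_const 2
        refine this.congr_deriv ?_
        field_simp
        ring
      have h2 : HasDerivAt (fun y => Real.log x * Real.log y)
          (Real.log x * y⁻¹) y := (Real.hasDerivAt_log hy0.ne').const_mul _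
      refine (h1.sub h2).congr_deriv ?_
      field_simp
    rw [integral_eq_sub_of_hasDerivAt hderiv (phi_intble' hs0 hs1)]
    rw [Real.log_one, Real.log_sqrt hx0.le]
    ring
  have hmono : ∫ y in s..1, (Real.log y - Real.log x) / y ≤
      ∫ y in s..1, (Real.log x - Real.log y) / (x - y) := by
    refine integral_mono_on hs1.le (phi_intble' hs0 hs1)
      ((g_intble' hx0 hx1).mono_set hsub1) ?_
    intro y hy
    have hy0 : x < y := lt_of_lt_of_le hxs hy.1
    have hkey : (Real.log x - Real.log y) / (x - y)
        = (Real.log y - Real.log x) / (y - x) := by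
      rw [← neg_div_neg_eq, neg_sub, neg_sub]
    rw [hkey]
    have hnn : 0 ≤ Real.log y - Real.log x :=
      sub_nonneg.mpr (Real.log_le_log hx0 hy0.le)
    gcongr
    · linarith
  have hsplit : (∫ y in (0:ℝ)..s, (Real.log x - Real.log y) / (x - y))
        + (∫ y in s..1, (Real.log x - Real.log y) / (x - y))
      = ∫ y in (0:ℝ)..1, (Real.log x - Real.log y) / (x - y) :=
    integral_add_adjacent_intervals ((g_intble' hx0 hx1).mono_set hsub2)
      ((g_intble' hx0 hx1).mono_set hsub1)
  have hhead : 0 ≤ ∫ y in (0:ℝ)..s, (Real.log x - Real.log y) / (x - y) := by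
    rw [integral_of_le hs0.le]
    apply setIntegral_nonneg measurableSet_Ioc
    intro y hy
    exact g_nonneg' hx0 y hy.1
  linarith

/-- For `b x = log |x|` and `f = χ_(0,1)`, the commutator `[b,H]f` at `x ∈ (0,1)` is
interpreted as `∫ y in (0,1), (log x - log y)/(x - y) dy`. -/
theorem commutator_subgaussian_decay_sharp :
    ∃ c : ℝ, 0 < c ∧ ∃ t₀ : ℝ, 0 < t₀ ∧ ∀ t : ℝ, t₀ < t →
      ENNReal.ofReal (Real.exp (-Real.sqrt (c * t))) ≤
        volume {x ∈ Set.Ioo (0:ℝ) 1 |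
          t < |∫ y in (0:ℝ)..1, (Real.log |x| - Real.log |y|) / (x - y)|} := by
  refine ⟨8/3, by norm_num, 1, one_pos, fun t ht => ?_⟩
  have ht0 : (0:ℝ) < t := lt_trans one_pos ht
  set r := Real.exp (-Real.sqrt (8/3 * t)) with hr
  have hrpos : 0 < r := Real.exp_pos _
  have hsq : 0 < Real.sqrt (8/3 * t) := Real.sqrt_pos.mpr (by positivity)
  have hr1 : r < 1 := by
    rw [hr]
    exact Real.exp_lt_one_iff.mpr (by linarith)
  have hsubset : Set.Ioo (0:ℝ) r ⊆ {x ∈ Set.Ioo (0:ℝ) 1 |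
      t < |∫ y in (0:ℝ)..1, (Real.log |x| - Real.log |y|) / (x - y)|} := by
    intro x hx
    have hx0 : 0 < x := hx.1
    have hx1 : x < 1 := hx.2.trans hr1
    refine ⟨⟨hx0, hx1⟩, ?_⟩
    have heq : (∫ y in (0:ℝ)..1, (Real.log |x| - Real.log |y|) / (x - y))
        = ∫ y in (0:ℝ)..1, (Real.log x - Real.log y) / (x - y) := by
      simp only [Real.log_abs]
    rw [heq]
    have hlb := integral_lb' hx0 hx1
    have hnn : (0:ℝ) ≤ ∫ y in (0:ℝ)..1, (Real.log x - Real.log y) / (x - y) :=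
      le_trans (by positivity) hlb
    rw [abs_of_nonneg hnn]
    have hlog : Real.log x < -Real.sqrt (8/3 * t) := by
      have h1 : Real.log x < Real.log r := Real.log_lt_log hx0 hx.2
      rwa [hr, Real.log_exp] at h1
    have h2 : Real.sqrt (8/3 * t) < -Real.log x := by linarith
    have h3 : Real.sqrt (8/3 * t) ^ 2 < (-Real.log x) ^ 2 :=
      pow_lt_pow_left₀ h2 (Real.sqrt_nonneg _) (by norm_num)
    rw [Real.sq_sqrt (by positivity : (0:ℝ) ≤ 8/3 * t)] at h3
    nlinarith
  calc ENNReal.ofReal (Real.exp (-Real.sqrt (8/3 * t)))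
      = volume (Set.Ioo (0:ℝ) r) := by rw [Real.volume_Ioo, sub_zero]
    _ ≤ _ := measure_mono hsubset
end

section
/- Let b(x) = log|x|, f = χ_{(0,1)} and H the Hilbert transform. Then for some constant c > 0 and all 1 < p < ∞, ‖[b,H]f‖_{L^p(ℝ)} ≥ c p². Consequently, no bound of the form ‖[b,H]‖_{L^p→L^p} ≤ C p (p')² (which grows only linearly in p as p → ∞) can control [b,H], contradicting any pointwise sparse domination of [b,H] by operators B_S f = Σ_{Q∈S}‖f‖_{L log L,Q}χ_Q. -/
open MeasureTheory ENNReal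

section Aux

open Real Set

/-- `log` is integrable on `(0,1]`. -/
lemma aux_integrableOn_log_Ioc : IntegrableOn Real.log (Set.Ioc (0:ℝ) 1) := by
  have hrpow : IntegrableOn (fun y : ℝ => y ^ (-(1/2) : ℝ)) (Set.Ioc (0:ℝ) 1) := by
    have h := intervalIntegral.intervalIntegrable_rpow' (a := 0) (b := 1)
      (r := -(1/2)) (by norm_num)
    rwa [intervalIntegrable_iff_integrableOn_Ioc_of_le (by norm_num : (0:ℝ) ≤ 1)] at h
  apply Integrable.mono' (hrpow.const_mul 2) Real.measurable_log.aestronglyMeasurable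
  filter_upwards [ae_restrict_mem measurableSet_Ioc] with y hy
  have hy0 : (0:ℝ) < y := hy.1
  have hylog : Real.log y ≤ 0 := Real.log_nonpos hy0.le hy.2
  have h1 : Real.log (y ^ (-(1/2) : ℝ)) = (-(1/2)) * Real.log y := Real.log_rpow hy0 _
  have h2 : Real.log (y ^ (-(1/2) : ℝ)) ≤ y ^ (-(1/2) : ℝ) - 1 :=
    Real.log_le_sub_one_of_pos (Real.rpow_pos_of_pos hy0 _)
  have h3 : (0:ℝ) < y ^ (-(1/2) : ℝ) := Real.rpow_pos_of_pos hy0 _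
  rw [Real.norm_eq_abs, abs_of_nonpos hylog]
  nlinarith

/-- The commutator integrand is integrable in `y` on `(0,1]`. -/
lemma aux_integrableOn_g {x : ℝ} (hx : x ∈ Set.Ioo (0:ℝ) 1) :
    IntegrableOn (fun y => (Real.log x - Real.log y) / (x - y)) (Set.Ioc (0:ℝ) 1) := by
  obtain ⟨hx0, hx1⟩ := hx
  have hmeas : AEStronglyMeasurable (fun y => (Real.log x - Real.log y) / (x - y))
      (volume.restrict (Set.Ioc (0:ℝ) 1)) :=
    ((measurable_const.sub Real.measurable_log).div
      (measurable_const.sub measurable_id)).aestronglyMeasurable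
  have hdom : IntegrableOn (fun y => (2/x) * (|Real.log x| + |Real.log y| + 1))
      (Set.Ioc (0:ℝ) 1) := by
    apply Integrable.const_mul
    exact ((integrable_const _).add aux_integrableOn_log_Ioc.abs).add (integrable_const 1)
  apply Integrable.mono' hdom hmeas
  filter_upwards [ae_restrict_mem measurableSet_Ioc] with y hy
  have hy0 : (0:ℝ) < y := hy.1
  have hy1 : y ≤ 1 := hy.2
  have hS : (1:ℝ) ≤ |Real.log x| + |Real.log y| + 1 := by
    have := abs_nonneg (Real.log x); have := abs_nonneg (Real.log y); linarith
  have hx2 : (0:ℝ) < 2 / x := by positivity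
  have h2x : 2 / x ≤ (2/x) * (|Real.log x| + |Real.log y| + 1) :=
    le_mul_of_one_le_right hx2.le hS
  -- nonnegativity of the integrand
  have hg0 : 0 ≤ (Real.log x - Real.log y) / (x - y) := by
    rcases le_or_gt y x with hyx | hyx
    · exact div_nonneg (by linarith [Real.log_le_log hy0 hyx]) (by linarith)
    · rw [← neg_div_neg_eq]
      exact div_nonneg (by linarith [Real.log_le_log hx0 hyx.le]) (by linarith)
  rw [Real.norm_eq_abs, abs_of_nonneg hg0]
  rcases le_or_gt y (x/2) with hA | hB
  · -- y ≤ x/2 : denominator at least x/2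
    have hnum : 0 ≤ Real.log x - Real.log y := by
      linarith [Real.log_le_log hy0 (by linarith : y ≤ x)]
    have hden : x / 2 ≤ x - y := by linarith
    have h1 : (Real.log x - Real.log y) / (x - y) ≤ (Real.log x - Real.log y) / (x/2) :=
      div_le_div_of_nonneg_left hnum (by positivity) hden
    have h2 : (Real.log x - Real.log y) / (x/2) = (2/x) * (Real.log x - Real.log y) := by
      field_simp
    have h3 : Real.log x - Real.log y ≤ |Real.log x| + |Real.log y| + 1 := by
      have := abs_nonneg (Real.log x)
      have := le_abs_self (Real.log x)
      have := neg_abs_le (Real.log y)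
      linarith
    calc (Real.log x - Real.log y) / (x - y) ≤ (2/x) * (Real.log x - Real.log y) := by
          rw [← h2]; exact h1
      _ ≤ (2/x) * (|Real.log x| + |Real.log y| + 1) := by
          apply mul_le_mul_of_nonneg_left h3 hx2.le
  · rcases lt_or_ge y x with hyx | hyx
    · -- x/2 < y < x : bound by 1/y ≤ 2/x
      have hnum : Real.log x - Real.log y ≤ (x - y) / y := by
        have h1 : Real.log x - Real.log y = Real.log (x / y) :=
          (Real.log_div hx0.ne' hy0.ne').symm
        have h2 : Real.log (x / y) ≤ x / y - 1 :=
          Real.log_le_sub_one_of_pos (by positivity)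
        have h3 : x / y - 1 = (x - y) / y := by field_simp
        linarith [h1 ▸ (h3 ▸ h2)]
      have hden : (0:ℝ) < x - y := by linarith
      have h1 : (Real.log x - Real.log y) / (x - y) ≤ ((x - y)/y) / (x - y) :=
        (div_le_div_iff_of_pos_right hden).mpr hnum
      have h2 : ((x - y)/y) / (x - y) = 1 / y := by field_simp
      have h3 : 1 / y ≤ 2 / x := by
        rw [div_le_div_iff₀ hy0 hx0]; linarith
      calc (Real.log x - Real.log y) / (x - y) ≤ 1 / y := by rw [← h2]; exact h1
        _ ≤ 2 / x := h3
        _ ≤ (2/x) * (|Real.log x| + |Real.log y| + 1) := h2x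
    · rcases eq_or_lt_of_le hyx with heq | hyx'
      · -- y = x : integrand is 0
        rw [← heq]
        simp only [sub_self, zero_div]
        positivity
      · -- x < y : bound by 1/x ≤ 2/x
        have hrw : (Real.log x - Real.log y) / (x - y)
            = (Real.log y - Real.log x) / (y - x) := by
          rw [← neg_div_neg_eq]; ring_nf
        have hnum : Real.log y - Real.log x ≤ (y - x) / x := by
          have h1 : Real.log y - Real.log x = Real.log (y / x) :=
            (Real.log_div hy0.ne' hx0.ne').symm
          have h2 : Real.log (y / x) ≤ y / x - 1 :=
            Real.log_le_sub_one_of_pos (by positivity)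
          have h3 : y / x - 1 = (y - x) / x := by field_simp
          linarith [h1 ▸ (h3 ▸ h2)]
        have hden : (0:ℝ) < y - x := by linarith
        have h1 : (Real.log y - Real.log x) / (y - x) ≤ ((y - x)/x) / (y - x) :=
          (div_le_div_iff_of_pos_right hden).mpr hnum
        have h2 : ((y - x)/x) / (y - x) = 1 / x := by field_simp
        calc (Real.log x - Real.log y) / (x - y) = (Real.log y - Real.log x) / (y - x) := hrw
          _ ≤ 1 / x := by rw [← h2]; exact h1
          _ ≤ 2 / x := by rw [div_le_div_iff₀ hx0 hx0]; linarith
          _ ≤ (2/x) * (|Real.log x| + |Real.log y| + 1) := h2x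

/-- Pointwise lower bound `(log x)²/2 ≤ [b,H]f(x)` for `x ∈ (0,1)`. -/
lemma aux_lower {x : ℝ} (hx : x ∈ Set.Ioo (0:ℝ) 1) :
    (Real.log x)^2 / 2 ≤ ∫ y in (0:ℝ)..1, (Real.log x - Real.log y) / (x - y) := by
  obtain ⟨hx0, hx1⟩ := hx
  set g : ℝ → ℝ := fun y => (Real.log x - Real.log y) / (x - y) with hg
  set φ : ℝ → ℝ := fun y => (Real.log y - Real.log x) / y with hφ
  have hgI : IntervalIntegrable g volume 0 1 := by
    rw [intervalIntegrable_iff_integrableOn_Ioc_of_le (by norm_num : (0:ℝ) ≤ 1)]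
    exact aux_integrableOn_g ⟨hx0, hx1⟩
  have hsub1 : Set.uIcc (0:ℝ) x ⊆ Set.uIcc (0:ℝ) 1 := by
    rw [Set.uIcc_of_le hx0.le, Set.uIcc_of_le (by norm_num : (0:ℝ) ≤ 1)]
    exact Set.Icc_subset_Icc le_rfl hx1.le
  have hsub2 : Set.uIcc x (1:ℝ) ⊆ Set.uIcc (0:ℝ) 1 := by
    rw [Set.uIcc_of_le hx1.le, Set.uIcc_of_le (by norm_num : (0:ℝ) ≤ 1)]
    exact Set.Icc_subset_Icc hx0.le le_rfl
  have hgI1 : IntervalIntegrable g volume 0 x := hgI.mono_set hsub1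
  have hgI2 : IntervalIntegrable g volume x 1 := hgI.mono_set hsub2
  have hsplit : (∫ y in (0:ℝ)..x, g y) + ∫ y in x..(1:ℝ), g y = ∫ y in (0:ℝ)..1, g y :=
    intervalIntegral.integral_add_adjacent_intervals hgI1 hgI2
  -- first piece nonnegative
  have h1 : 0 ≤ ∫ y in (0:ℝ)..x, g y := by
    rw [intervalIntegral.integral_of_le hx0.le]
    apply setIntegral_nonneg measurableSet_Ioc
    intro y hy
    exact div_nonneg (by linarith [Real.log_le_log hy.1 hy.2]) (by linarith [hy.2])
  -- φ is continuous (hence integrable) on [x,1]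
  have hne : ∀ y ∈ Set.uIcc x (1:ℝ), y ≠ 0 := by
    intro y hy
    rw [Set.uIcc_of_le hx1.le] at hy
    exact (lt_of_lt_of_le hx0 hy.1).ne'
  have hφc : ContinuousOn φ (Set.uIcc x (1:ℝ)) := by
    apply ContinuousOn.div
    · exact ((Real.continuousOn_log.mono (fun y hy => hne y hy)).sub continuousOn_const)
    · exact continuousOn_id
    · exact hne
  have hφI : IntervalIntegrable φ volume x 1 := hφc.intervalIntegrable
  -- second piece dominates ∫ φ
  have h2 : (∫ y in x..(1:ℝ), φ y) ≤ ∫ y in x..(1:ℝ), g y := by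
    apply intervalIntegral.integral_mono_on hx1.le hφI hgI2
    intro y hy
    have hxy : x ≤ y := hy.1
    have hy0 : (0:ℝ) < y := lt_of_lt_of_le hx0 hxy
    have hnum : 0 ≤ Real.log y - Real.log x := by linarith [Real.log_le_log hx0 hxy]
    have hrw : g y = (Real.log y - Real.log x) / (y - x) := by
      simp only [hg, ← neg_div_neg_eq (Real.log x - Real.log y)]; ring_nf
    rcases eq_or_lt_of_le hxy with heq | hlt
    · simp [hφ, hg, ← heq]
    · rw [hrw]
      exact div_le_div_of_nonneg_left hnum (by linarith) (by linarith)
  -- compute ∫ φ via FTC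
  have h3 : (∫ y in x..(1:ℝ), φ y) = (Real.log x)^2 / 2 := by
    have hderiv : ∀ y ∈ Set.uIcc x (1:ℝ),
        HasDerivAt (fun y => (Real.log y)^2/2 - Real.log x * Real.log y) (φ y) y := by
      intro y hy
      have hy0 : y ≠ 0 := hne y hy
      have hy0' : (0:ℝ) < y := by
        rw [Set.uIcc_of_le hx1.le] at hy; exact lt_of_lt_of_le hx0 hy.1
      have hlog : HasDerivAt Real.log y⁻¹ y := Real.hasDerivAt_log hy0
      have hd1 : HasDerivAt (fun y => (Real.log y)^2/2)
          ((2 * Real.log y ^ 1 * y⁻¹)/2) y := (hlog.pow 2).div_const 2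
      have hd2 : HasDerivAt (fun y => Real.log x * Real.log y)
          (Real.log x * y⁻¹) y := hlog.const_mul _
      have : HasDerivAt (fun y => (Real.log y)^2/2 - Real.log x * Real.log y) _ y := hd1.sub hd2
      convert this using 1
      simp only [hφ, pow_one]
      field_simp
    rw [intervalIntegral.integral_eq_sub_of_hasDerivAt hderiv hφI]
    simp [Real.log_one]
    ring
  linarith [hsplit, h1, h2, h3]

/-- The integrand with absolute values agrees with `g` on `[0,1]`. -/
lemma aux_congr {x : ℝ} (hx : x ∈ Set.Ioo (0:ℝ) 1) :
    (∫ y in (0:ℝ)..1, (Real.log |x| - Real.log |y|) / (x - y))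
      = ∫ y in (0:ℝ)..1, (Real.log x - Real.log y) / (x - y) := by
  apply intervalIntegral.integral_congr
  intro y hy
  rw [Set.uIcc_of_le (by norm_num : (0:ℝ) ≤ 1)] at hy
  simp only [abs_of_pos hx.1, abs_of_nonneg hy.1]

end Aux

/-- For `b x = log |x|`, `f = χ_(0,1)` and `H` the Hilbert transform, interpreting
`[b,H]f(x) = ∫ y in (0,1), (log|x| - log|y|)/(x-y) dy` for `x ∈ (0,1)`, the `L^p` norm of
the commutator grows at least like `p²`; consequently no bound `‖[b,H]f‖_p ≤ C p (p')²`
(as would follow from an `L log L` sparse domination) is possible. -/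
theorem commutator_Lp_lower_bound_p_squared :
    ∃ c : ℝ, 0 < c ∧
      (∀ p : ℝ, 1 < p →
        ENNReal.ofReal (c * p ^ 2) ≤
          (∫⁻ x in Set.Ioo (0:ℝ) 1,
            ENNReal.ofReal |∫ y in (0:ℝ)..1, (Real.log |x| - Real.log |y|) / (x - y)| ^ p)
            ^ (1/p)) ∧
      ¬ ∃ C : ℝ, 0 < C ∧ ∀ p : ℝ, 1 < p →
        (∫⁻ x in Set.Ioo (0:ℝ) 1,
          ENNReal.ofReal |∫ y in (0:ℝ)..1, (Real.log |x| - Real.log |y|) / (x - y)| ^ p)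
          ^ (1/p) ≤ ENNReal.ofReal (C * p * (p/(p-1))^2) := by
  have key : ∀ p : ℝ, 1 < p →
      ENNReal.ofReal ((1/4 : ℝ) * p ^ 2) ≤
        (∫⁻ x in Set.Ioo (0:ℝ) 1,
          ENNReal.ofReal |∫ y in (0:ℝ)..1, (Real.log |x| - Real.log |y|) / (x - y)| ^ p)
          ^ (1/p) := by
    intro p hp
    have hp0 : (0:ℝ) < p := lt_trans one_pos hp
    set t : ℝ := Real.exp (-(2*p)) with ht
    have ht0 : (0:ℝ) < t := Real.exp_pos _
    have ht1 : t < 1 := by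
      rw [ht, Real.exp_lt_one_iff]; linarith
    -- pointwise lower bound on (0,t)
    have hpt : ∀ x ∈ Set.Ioo (0:ℝ) t,
        ENNReal.ofReal (2 * p^2) ^ p ≤
          ENNReal.ofReal |∫ y in (0:ℝ)..1, (Real.log |x| - Real.log |y|) / (x - y)| ^ p := by
      intro x hx
      have hx01 : x ∈ Set.Ioo (0:ℝ) 1 := ⟨hx.1, lt_trans hx.2 ht1⟩
      have hF : (Real.log x)^2 / 2 ≤
          ∫ y in (0:ℝ)..1, (Real.log |x| - Real.log |y|) / (x - y) := by
        rw [aux_congr hx01]; exact aux_lower hx01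
      have hlogx : Real.log x < -(2*p) := by
        calc Real.log x < Real.log t := Real.log_lt_log hx.1 hx.2
          _ = -(2*p) := Real.log_exp _
      have hsq : 2 * p^2 ≤ (Real.log x)^2 / 2 := by nlinarith
      have habs : 2 * p^2 ≤ |∫ y in (0:ℝ)..1, (Real.log |x| - Real.log |y|) / (x - y)| := by
        calc 2 * p^2 ≤ (Real.log x)^2 / 2 := hsq
          _ ≤ _ := le_trans hF (le_abs_self _)
      exact ENNReal.rpow_le_rpow (ENNReal.ofReal_le_ofReal habs) hp0.le
    -- integral lower bound
    have hI : ENNReal.ofReal (2 * p^2) ^ p * ENNReal.ofReal t ≤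
        ∫⁻ x in Set.Ioo (0:ℝ) 1,
          ENNReal.ofReal |∫ y in (0:ℝ)..1, (Real.log |x| - Real.log |y|) / (x - y)| ^ p := by
      have hsub : Set.Ioo (0:ℝ) t ⊆ Set.Ioo (0:ℝ) 1 := Set.Ioo_subset_Ioo le_rfl ht1.le
      calc ENNReal.ofReal (2 * p^2) ^ p * ENNReal.ofReal t
          = ∫⁻ _ in Set.Ioo (0:ℝ) t, ENNReal.ofReal (2 * p^2) ^ p := by
            rw [setLIntegral_const, Real.volume_Ioo, sub_zero]
        _ ≤ ∫⁻ x in Set.Ioo (0:ℝ) t,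
              ENNReal.ofReal |∫ y in (0:ℝ)..1, (Real.log |x| - Real.log |y|) / (x - y)| ^ p := by
            apply lintegral_mono_ae
            filter_upwards [ae_restrict_mem measurableSet_Ioo] with x hx
            exact hpt x hx
        _ ≤ _ := lintegral_mono' (Measure.restrict_mono hsub le_rfl) le_rfl
    -- take 1/p powers
    have hfinal := ENNReal.rpow_le_rpow hI (by positivity : (0:ℝ) ≤ 1/p)
    have hcomp : (ENNReal.ofReal (2 * p^2) ^ p * ENNReal.ofReal t) ^ (1/p)
        = ENNReal.ofReal (2 * p^2 * Real.exp (-2)) := by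
      rw [ENNReal.mul_rpow_of_nonneg _ _ (by positivity : (0:ℝ) ≤ 1/p),
        ← ENNReal.rpow_mul, mul_one_div_cancel hp0.ne', ENNReal.rpow_one,
        ENNReal.ofReal_rpow_of_pos ht0]
      rw [← ENNReal.ofReal_mul (by positivity)]
      congr 1
      rw [ht, Real.rpow_def_of_pos (Real.exp_pos _), Real.log_exp]
      congr 1
      field_simp
    refine le_trans ?_ (hcomp ▸ hfinal)
    apply ENNReal.ofReal_le_ofReal
    have he : Real.exp 1 < 2.7182818286 := Real.exp_one_lt_d9
    have he2 : Real.exp 2 = Real.exp 1 * Real.exp 1 := by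
      rw [← Real.exp_add]; norm_num
    have he2' : Real.exp 2 < 8 := by nlinarith [Real.exp_pos 1]
    have hinv : Real.exp (-2) = (Real.exp 2)⁻¹ := by rw [Real.exp_neg]
    have h8 : (1/8 : ℝ) < Real.exp (-2) := by
      rw [hinv]
      rw [div_lt_iff₀ (by norm_num : (0:ℝ) < 8)]
      rw [inv_mul_eq_div, lt_div_iff₀ (Real.exp_pos 2)]
      linarith
    nlinarith [sq_nonneg p]
  refine ⟨1/4, by norm_num, key, ?_⟩
  rintro ⟨C, hC, hbound⟩
  set p : ℝ := 16*C + 2 with hpdef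
  have hp1 : 1 < p := by simp only [hpdef]; linarith
  have h1 := key p hp1
  have h2 := hbound p hp1
  have h3 : ENNReal.ofReal ((1/4 : ℝ) * p ^ 2) ≤ ENNReal.ofReal (C * p * (p/(p-1))^2) :=
    le_trans h1 h2
  have hp2 : (2:ℝ) ≤ p := by simp only [hpdef]; linarith
  have hq : p/(p-1) ≤ 2 := by
    rw [div_le_iff₀ (by linarith : (0:ℝ) < p - 1)]; linarith
  have hq0 : 0 ≤ p/(p-1) := div_nonneg (by linarith) (by linarith)
  have hreal : (1/4 : ℝ) * p ^ 2 ≤ C * p * (p/(p-1))^2 :=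
    (ENNReal.ofReal_le_ofReal_iff (by positivity)).mp h3
  have hrhs : C * p * (p/(p-1))^2 ≤ C * p * 4 := by
    apply mul_le_mul_of_nonneg_left _ (by positivity)
    nlinarith
  nlinarith
end
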